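/- The Barbasch-Vogan duality d_BV on type B partitions (d_BV(p) = ((p^-)_C)*) is order-reversing: if p ≥ q are partitions of 2n+1 of type B in the dominance order, then d_BV(p) ≤ d_BV(q) as partitions of 2n. -/

import Mathlib

/-- `p` is a partition of `n`: the parts `p 0 ≥ p 1 ≥ ...` are non-increasing,
eventually zero, and sum to `n` (trailing zero padding). -/
def PartitionOf (n : ℕ) (p : ℕ → ℕ) : Prop :=
  Antitone p ∧ ∃ N, (∀ i, N ≤ i → p i = 0) ∧ ∑ i ∈ Finset.range N, p i = n

/-- Sum of the first `t` parts. -/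
def psum (p : ℕ → ℕ) (t : ℕ) : ℕ := ∑ i ∈ Finset.range t, p i

/-- Dominance order: every partial sum of `p` is at least that of `q`. -/
def Dominates (p q : ℕ → ℕ) : Prop := ∀ t, psum q t ≤ psum p t

/-- Transpose (conjugate) partition: `transpose p i = #{j : p j ≥ i + 1}` (0-indexed). -/
noncomputable def transpose (p : ℕ → ℕ) (i : ℕ) : ℕ := Set.ncard {j | i < p j}

/-- Multiplicity of the part `m` in `p`. -/
noncomputable def partMult (p : ℕ → ℕ) (m : ℕ) : ℕ := Set.ncard {i | p i = m}

/-- Type B (and type D) condition: every (positive) even part occurs with even multiplicity. -/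
def TypeBseq (p : ℕ → ℕ) : Prop := ∀ m, 0 < m → Even m → Even (partMult p m)

/-- Type C condition: every odd part occurs with even multiplicity. -/
def TypeCseq (p : ℕ → ℕ) : Prop := ∀ m, 0 < m → Odd m → Even (partMult p m)

/-- Number of (nonzero) parts of `p`: least index after which `p` vanishes. -/
noncomputable def plen (p : ℕ → ℕ) : ℕ := sInf {N | ∀ i, N ≤ i → p i = 0}

/-- `p⁻`: subtract 1 from the smallest (last nonzero) part. -/
noncomputable def pminus (p : ℕ → ℕ) : ℕ → ℕ := fun i => if i + 1 = plen p then p i - 1 else p i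

/-- `p⁺`: add 1 to the largest part. -/
def pplus (p : ℕ → ℕ) : ℕ → ℕ := fun i => if i = 0 then p i + 1 else p i

lemma psum_mono (p : ℕ → ℕ) : Monotone (psum p) := fun _ _ h =>
  Finset.sum_le_sum_of_subset (Finset.range_subset_range.2 h)

lemma psum_split (p : ℕ → ℕ) {M t : ℕ} (h : M ≤ t) :
    psum p t = psum p M + ∑ i ∈ Finset.Ico M t, p i := by
  unfold psum
  rw [Finset.range_eq_Ico, Finset.range_eq_Ico]
  exact (Finset.sum_Ico_consecutive p (Nat.zero_le M) h).symm

lemma psum_total {p : ℕ → ℕ} {N M : ℕ} (hM : ∀ i, M ≤ i → p i = 0)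
    (hs : psum p M = N) {t : ℕ} (ht : M ≤ t) : psum p t = N := by
  rw [psum_split p ht, hs, Finset.sum_eq_zero, add_zero]
  intro i hi
  exact hM i (Finset.mem_Ico.1 hi).1

lemma psum_le_total {p : ℕ → ℕ} {N M : ℕ} (hM : ∀ i, M ≤ i → p i = 0)
    (hs : psum p M = N) (t : ℕ) : psum p t ≤ N := by
  rcases le_total t M with h | h
  · exact hs ▸ psum_mono p h
  · exact (psum_total hM hs h).le

lemma transpose_eq (a : ℕ → ℕ) {Na : ℕ} (hNa : ∀ i, Na ≤ i → a i = 0) (i : ℕ) :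
    transpose a i = ((Finset.range Na).filter (fun j => i < a j)).card := by
  have h : {j | i < a j} = ↑((Finset.range Na).filter (fun j => i < a j)) := by
    ext j
    simp only [Set.mem_setOf_eq, Finset.coe_filter, Finset.mem_range]
    constructor
    · intro hj
      refine ⟨?_, hj⟩
      by_contra h'
      rw [hNa j (le_of_not_gt h')] at hj; omega
    · exact fun h => h.2
  rw [transpose, h, Set.ncard_coe_finset]

lemma psum_transpose (a : ℕ → ℕ) {Na : ℕ} (hNa : ∀ i, Na ≤ i → a i = 0) (t : ℕ) :
    psum (transpose a) t = ∑ j ∈ Finset.range Na, min (a j) t := by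
  unfold psum
  have h1 : ∀ i, transpose a i = ∑ j ∈ Finset.range Na, if i < a j then 1 else 0 := by
    intro i; rw [transpose_eq a hNa i, Finset.card_filter]
  simp_rw [h1]
  rw [Finset.sum_comm]
  refine Finset.sum_congr rfl fun j _ => ?_
  rw [← Finset.card_filter]
  have : (Finset.range t).filter (fun i => i < a j) = Finset.range (min (a j) t) := by
    ext x; simp only [Finset.mem_filter, Finset.mem_range, lt_min_iff]; omega
  rw [this, Finset.card_range]

lemma minsum_le {a : ℕ → ℕ} {Na N : ℕ} (hNa : ∀ i, Na ≤ i → a i = 0)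
    (htot : psum a Na = N) (t m : ℕ) :
    (∑ j ∈ Finset.range Na, min (a j) t) + psum a m ≤ t * m + N := by
  rcases le_total m Na with hm | hm
  · have hsplit : (∑ j ∈ Finset.range Na, min (a j) t)
        = (∑ j ∈ Finset.range m, min (a j) t) + ∑ j ∈ Finset.Ico m Na, min (a j) t := by
      rw [Finset.range_eq_Ico, Finset.range_eq_Ico]
      exact (Finset.sum_Ico_consecutive _ (Nat.zero_le m) hm).symm
    have h1 : (∑ j ∈ Finset.range m, min (a j) t) ≤ t * m := by
      calc (∑ j ∈ Finset.range m, min (a j) t) ≤ ∑ _j ∈ Finset.range m, t :=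
            Finset.sum_le_sum fun j _ => min_le_right _ _
        _ = t * m := by rw [Finset.sum_const, Finset.card_range, smul_eq_mul, mul_comm]
    have h2 : (∑ j ∈ Finset.Ico m Na, min (a j) t) ≤ ∑ j ∈ Finset.Ico m Na, a j :=
      Finset.sum_le_sum fun j _ => min_le_left _ _
    have h3 : psum a m + ∑ j ∈ Finset.Ico m Na, a j = N := by
      rw [← psum_split a hm, htot]
    omega
  · have h1 : psum a m = N := psum_total hNa htot hm
    have h2 : (∑ j ∈ Finset.range Na, min (a j) t) ≤ t * Na := by
      calc (∑ j ∈ Finset.range Na, min (a j) t) ≤ ∑ _j ∈ Finset.range Na, t :=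
            Finset.sum_le_sum fun j _ => min_le_right _ _
        _ = t * Na := by rw [Finset.sum_const, Finset.card_range, smul_eq_mul, mul_comm]
    have h3 : t * Na ≤ t * m := Nat.mul_le_mul_left t hm
    omega

lemma minsum_eq {a : ℕ → ℕ} {Na N : ℕ} (ha : Antitone a) (hNa : ∀ i, Na ≤ i → a i = 0)
    (htot : psum a Na = N) (t : ℕ) :
    ∃ m, (∑ j ∈ Finset.range Na, min (a j) t) + psum a m = t * m + N := by
  have hex : ∃ j, a j ≤ t := ⟨Na, by rw [hNa Na le_rfl]; exact Nat.zero_le t⟩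
  refine ⟨Nat.find hex, ?_⟩
  set m := Nat.find hex with hmdef
  have hm : m ≤ Na := Nat.find_le (by rw [hNa Na le_rfl]; exact Nat.zero_le t)
  have hms : a m ≤ t := Nat.find_spec hex
  have hsplit : (∑ j ∈ Finset.range Na, min (a j) t)
      = (∑ j ∈ Finset.range m, min (a j) t) + ∑ j ∈ Finset.Ico m Na, min (a j) t := by
    rw [Finset.range_eq_Ico, Finset.range_eq_Ico]
    exact (Finset.sum_Ico_consecutive _ (Nat.zero_le m) hm).symm
  have h1 : (∑ j ∈ Finset.range m, min (a j) t) = t * m := by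
    rw [Finset.sum_congr rfl (fun j hj => min_eq_right
      (le_of_not_ge (Nat.find_min hex (Finset.mem_range.1 hj)))),
      Finset.sum_const, Finset.card_range, smul_eq_mul, mul_comm]
  have h2 : (∑ j ∈ Finset.Ico m Na, min (a j) t) = ∑ j ∈ Finset.Ico m Na, a j :=
    Finset.sum_congr rfl fun j hj =>
      min_eq_left (le_trans (ha (Finset.mem_Ico.1 hj).1) hms)
  have h3 : psum a m + ∑ j ∈ Finset.Ico m Na, a j = N := by
    rw [← psum_split a hm, htot]
  omega

lemma transpose_rev {a b : ℕ → ℕ} {N Na Nb : ℕ}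
    (hb : Antitone b)
    (hNa : ∀ i, Na ≤ i → a i = 0) (hta : psum a Na = N)
    (hNb : ∀ i, Nb ≤ i → b i = 0) (htb : psum b Nb = N)
    (hdom : Dominates a b) : Dominates (transpose b) (transpose a) := by
  intro t
  rw [psum_transpose a hNa t, psum_transpose b hNb t]
  obtain ⟨m, hm⟩ := minsum_eq hb hNb htb t
  have h1 := minsum_le hNa hta t m
  have h2 := hdom m
  omega

/-- the Barbasch-Vogan duality `d_BV(p) = ((p⁻)_C)*` on type B partitions of
`2n+1` is order-reversing: if `p ≥ q` then `d_BV(p) ≤ d_BV(q)` as partitions of `2n`.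
Here `cp` (resp. `cq`) is the C-collapse of `p⁻` (resp. `q⁻`). -/
theorem stmt_13 (n : ℕ) (p q : ℕ → ℕ)
    (hp : PartitionOf (2 * n + 1) p) (hpB : TypeBseq p)
    (hq : PartitionOf (2 * n + 1) q) (hqB : TypeBseq q)
    (hdom : Dominates p q)
    (cp cq : ℕ → ℕ)
    (hcp : PartitionOf (2 * n) cp ∧ TypeCseq cp ∧ Dominates (pminus p) cp ∧
      ∀ c', PartitionOf (2 * n) c' → TypeCseq c' → Dominates (pminus p) c' → Dominates cp c')
    (hcq : PartitionOf (2 * n) cq ∧ TypeCseq cq ∧ Dominates (pminus q) cq ∧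
      ∀ c', PartitionOf (2 * n) c' → TypeCseq c' → Dominates (pminus q) c' → Dominates cq c') :
    Dominates (transpose cq) (transpose cp) := by
  obtain ⟨hpA, Np, hNp, hNpsum⟩ := hp
  obtain ⟨⟨hcpA, Ncp, hNcp, hNcpsum⟩, hcpC, hcpdom, hcpmax⟩ := hcp
  obtain ⟨⟨hcqA, Ncq, hNcq, hNcqsum⟩, hcqC, hcqdom, hcqmax⟩ := hcq
  -- plen facts for p
  set L := plen p with hLdef
  have hne : {N | ∀ i, N ≤ i → p i = 0}.Nonempty := ⟨Np, hNp⟩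
  have hLmem : ∀ i, L ≤ i → p i = 0 := Nat.sInf_mem hne
  have hLle : L ≤ Np := Nat.sInf_le hNp
  have hpsumL : psum p L = 2 * n + 1 := by
    have h := psum_total hLmem rfl hLle
    rw [← h]; exact hNpsum
  have hLpos : 0 < L := by
    by_contra h
    have h0 : psum p L = 0 := by
      simp [psum, Nat.eq_zero_of_not_pos h]
    omega
  have hpL1 : 1 ≤ p (L - 1) := by
    by_contra h
    have h0 : p (L - 1) = 0 := by omega
    have h1 : ∀ i, L - 1 ≤ i → p i = 0 := fun i hi =>
      Nat.le_antisymm (h0 ▸ hpA hi) (Nat.zero_le _)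
    have h2 : L ≤ L - 1 := Nat.sInf_le h1
    omega
  -- p⁻ partial sums
  have hpminus_lt : ∀ t, t < L → psum (pminus p) t = psum p t := by
    intro t ht
    refine Finset.sum_congr rfl fun i hi => ?_
    have hi' := Finset.mem_range.1 hi
    simp only [pminus]
    have hc : i + 1 ≠ plen p := by rw [← hLdef]; omega
    rw [if_neg hc]
  have hpminus_ge : ∀ t, L ≤ t → psum (pminus p) t = 2 * n := by
    intro t ht
    have key : psum p t = psum (pminus p) t + 1 := by
      have hcg : psum p t
          = ∑ i ∈ Finset.range t, (pminus p i + if i = L - 1 then 1 else 0) := by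
        refine Finset.sum_congr rfl fun i hi => ?_
        simp only [pminus]
        rcases eq_or_ne i (L - 1) with h | h
        · have h1 : i + 1 = plen p := by rw [← hLdef]; omega
          rw [if_pos h1, if_pos h, h]
          omega
        · have h1 : i + 1 ≠ plen p := by rw [← hLdef]; omega
          rw [if_neg h1, if_neg h, add_zero]
      rw [hcg, Finset.sum_add_distrib,
        Finset.sum_ite_eq' (Finset.range t) (L - 1) (fun _ => 1)]
      have hmem : L - 1 ∈ Finset.range t := Finset.mem_range.2 (by omega)
      rw [if_pos hmem]
      rfl
    have hpt : psum p t = 2 * n + 1 := psum_total hLmem hpsumL ht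
    omega
  -- Dominates (pminus p) cq
  have hkey : Dominates (pminus p) cq := by
    intro t
    rcases lt_or_ge t L with ht | ht
    · rw [hpminus_lt t ht]
      calc psum cq t ≤ psum (pminus q) t := hcqdom t
        _ ≤ psum q t := Finset.sum_le_sum fun i _ => by
              simp only [pminus]; split <;> omega
        _ ≤ psum p t := hdom t
    · rw [hpminus_ge t ht]
      exact psum_le_total hNcq hNcqsum t
  have hcpcq : Dominates cp cq :=
    hcpmax cq ⟨hcqA, Ncq, hNcq, hNcqsum⟩ hcqC hkey
  exact transpose_rev hcqA hNcp hNcpsum hNcq hNcqsum hcpcq
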